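/- Define T : ℕ × ℕ → ℕ by T(1,r)=1, T(2,r)=r+1, and T(n+1,r)=T(n,2^r) for n ≥ 2. Let p, r be positive integers with p ≥ 2 and let n = T(p,r). Then for any coloring c of the (p−1)-element subsets of [n] = {1,…,n} with r colors, there exists a subset P ⊆ [n] with |P| = p such that c(P \ {min P}) = c(P \ {max P}). -/
import Mathlib


/-- The tower function `T`: `T 1 r = 1`, `T 2 r = r + 1`, and
`T (n+1) r = T n (2 ^ r)` for `n ≥ 2`. -/
def T : ℕ → ℕ → ℕ
  | 0, _ => 0
  | 1, _ => 1
  | 2, r => r + 1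
  | (n + 3), r => T (n + 2) (2 ^ r)

lemma tower_key : ∀ (p r n : ℕ), n = T (p + 2) r → ∀ c : Finset ℕ → Fin r,
    ∃ P : Finset ℕ, P ⊆ Finset.Icc 1 n ∧ P.card = p + 2 ∧
      ∀ h : P.Nonempty, c (P.erase (P.min' h)) = c (P.erase (P.max' h)) := by
  intro p
  induction p with
  | zero =>
    intro r n hn c
    have hn' : n = r + 1 := hn
    obtain ⟨a, ha, b, hb, hab, hc⟩ :=
      Finset.exists_ne_map_eq_of_card_lt_of_maps_to
        (s := Finset.Icc 1 n) (t := (Finset.univ : Finset (Fin r)))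
        (f := fun x => c {x})
        (by simp [hn']) (fun x _ => Finset.mem_univ _)
    wlog hlt : a < b generalizing a b
    · exact this b hb a ha hab.symm hc.symm (by omega)
    have hne : ({a, b} : Finset ℕ).Nonempty := ⟨a, by simp⟩
    have habne : a ∉ ({b} : Finset ℕ) := by simp; omega
    refine ⟨{a, b}, ?_, ?_, ?_⟩
    · intro y hy
      simp only [Finset.mem_insert, Finset.mem_singleton] at hy
      rcases hy with rfl | rfl <;> assumption
    · rw [Finset.card_insert_of_notMem habne, Finset.card_singleton]
    · intro h
      have hmin : ({a, b} : Finset ℕ).min' h = a := by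
        apply le_antisymm
        · exact Finset.min'_le _ a (by simp)
        · apply Finset.le_min'
          intro y hy
          simp only [Finset.mem_insert, Finset.mem_singleton] at hy
          rcases hy with rfl | rfl <;> omega
      have hmax : ({a, b} : Finset ℕ).max' h = b := by
        apply le_antisymm
        · apply Finset.max'_le
          intro y hy
          simp only [Finset.mem_insert, Finset.mem_singleton] at hy
          rcases hy with rfl | rfl <;> omega
        · exact Finset.le_max' _ b (by simp)
      rw [hmin, hmax, Finset.erase_insert habne]
      have : ({a, b} : Finset ℕ).erase b = {a} := by
        ext y
        simp only [Finset.mem_erase, Finset.mem_insert, Finset.mem_singleton]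
        constructor
        · rintro ⟨h1, rfl | rfl⟩ <;> tauto
        · rintro rfl; exact ⟨by omega, Or.inl rfl⟩
      rw [this]
      exact hc.symm
  | succ p ih =>
    intro r n hn c
    have hn' : n = T (p + 2) (2 ^ r) := hn
    have hcard : Fintype.card (Finset (Fin r)) = 2 ^ r := by
      simp [Fintype.card_finset]
    classical
    let e : Finset (Fin r) ≃ Fin (2 ^ r) := Fintype.equivFinOfCardEq hcard
    let f : Finset ℕ → Finset (Fin r) := fun S =>
      Finset.univ.filter (fun j => ∃ x ∈ Finset.Icc 1 n,
        (∀ y ∈ S, y < x) ∧ c (insert x S) = j)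
    let c' : Finset ℕ → Fin (2 ^ r) := fun S => e (f S)
    obtain ⟨P', hsub, hcardP, hprop⟩ := ih (2 ^ r) n hn' c'
    have hne : P'.Nonempty := Finset.card_pos.mp (by omega)
    set a1 := P'.min' hne with ha1
    set ap := P'.max' hne with hap
    have ha1mem : a1 ∈ P' := P'.min'_mem hne
    have hapmem : ap ∈ P' := P'.max'_mem hne
    have hlt : a1 < ap := Finset.min'_lt_max'_of_card P' (by omega)
    have h2 := hprop hne
    have hsets : f (P'.erase a1) = f (P'.erase ap) := e.injective h2
    -- c P' belongs to the filter set of P'.erase ap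
    have hmem : c P' ∈ f (P'.erase ap) := by
      simp only [f, Finset.mem_filter, Finset.mem_univ, true_and]
      refine ⟨ap, hsub hapmem, ?_, ?_⟩
      · intro y hy
        rw [Finset.mem_erase] at hy
        exact lt_of_le_of_ne (Finset.le_max' _ y hy.2) hy.1
      · rw [Finset.insert_erase hapmem]
    rw [← hsets] at hmem
    simp only [f, Finset.mem_filter, Finset.mem_univ, true_and] at hmem
    obtain ⟨x, hxIcc, hxgt, hxc⟩ := hmem
    have hapA : ap ∈ P'.erase a1 := Finset.mem_erase.mpr ⟨by omega, hapmem⟩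
    have hapx : ap < x := hxgt ap hapA
    have hxall : ∀ y ∈ P', y < x := fun y hy =>
      lt_of_le_of_lt (Finset.le_max' _ y hy) hapx
    have hxnot : x ∉ P' := fun h => lt_irrefl x (hxall x h)
    refine ⟨insert x P', ?_, ?_, ?_⟩
    · exact Finset.insert_subset hxIcc hsub
    · rw [Finset.card_insert_of_notMem hxnot, hcardP]
    · intro h
      have hmin : (insert x P').min' h = a1 := by
        apply le_antisymm
        · exact Finset.min'_le _ a1 (Finset.mem_insert_of_mem ha1mem)
        · apply Finset.le_min'
          intro y hy
          rcases Finset.mem_insert.mp hy with rfl | hy'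
          · have := hxall a1 ha1mem; omega
          · exact Finset.min'_le _ y hy'
      have hmax : (insert x P').max' h = x := by
        apply le_antisymm
        · apply Finset.max'_le
          intro y hy
          rcases Finset.mem_insert.mp hy with rfl | hy'
          · exact le_refl _
          · exact le_of_lt (hxall y hy')
        · exact Finset.le_max' _ x (Finset.mem_insert_self x P')
      rw [hmin, hmax, Finset.erase_insert hxnot]
      have hxa1 : a1 ≠ x := by have := hxall a1 ha1mem; omega
      rw [Finset.erase_insert_of_ne hxa1.symm] -- may need different name
      exact hxc

/-- For any `r`-coloring of the `(p-1)`-element subsets of `[n] = {1, …, n}` with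
`n = T p r`, there is a `p`-element subset `P ⊆ [n]` such that `P \ {min P}` and
`P \ {max P}` get the same color. -/
theorem tower_ramsey (p r : ℕ) (hp : 2 ≤ p) (hr : 1 ≤ r) (n : ℕ) (hn : n = T p r)
    (c : Finset ℕ → Fin r) :
    ∃ P : Finset ℕ, P ⊆ Finset.Icc 1 n ∧ P.card = p ∧
      ∀ h : P.Nonempty, c (P.erase (P.min' h)) = c (P.erase (P.max' h)) := by
  obtain ⟨q, rfl⟩ : ∃ q, p = q + 2 := ⟨p - 2, by omega⟩
  exact tower_key q r n hn c
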